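/- Let 0 < μ < L and 0 ≤ σ² ≤ μ(L − μ), and let ξ ∈ [0, L]. Then the supremum over P ∈ P(μ,σ²,L) of ∫ min{ξ, x} dP(x) equals: ξ, if 0 ≤ ξ ≤ μ − σ²/(L − μ); (μ(L + ξ) − (μ² + σ²))/L, if μ − σ²/(L − μ) ≤ ξ ≤ μ + σ²/μ; and μ, if μ + σ²/μ ≤ ξ ≤ L. Moreover, this supremum is attained by some P ∈ P(μ,σ²,L). -/

import Mathlib

open MeasureTheory

/-- `P(μ,σ²,L)`: Borel probability measures supported in `[0,L]` with mean `μ`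
and second moment `μ² + σ²`. -/
def PmvL (μ s2 L : ℝ) : Set (Measure ℝ) :=
  {P | IsProbabilityMeasure P ∧ P (Set.Icc 0 L) = 1 ∧
       (∫ x, x ∂P) = μ ∧ (∫ x, x ^ 2 ∂P) = μ ^ 2 + s2}

lemma integrable_dirac'' (f : ℝ → ℝ) (hf : Measurable f) (a : ℝ) :
    Integrable f (Measure.dirac a) :=
  (integrable_const (f a)).congr (ae_eq_dirac' hf).symm

/-- Three-point measure. -/
noncomputable def tp (p q r a b c : ℝ) : Measure ℝ :=
  ENNReal.ofReal p • Measure.dirac a + ENNReal.ofReal q • Measure.dirac b +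
    ENNReal.ofReal r • Measure.dirac c

lemma tp_integral (f : ℝ → ℝ) (hf : Measurable f) {p q r : ℝ} (a b c : ℝ)
    (hp : 0 ≤ p) (hq : 0 ≤ q) (hr : 0 ≤ r) :
    ∫ x, f x ∂(tp p q r a b c) = p * f a + q * f b + r * f c := by
  have h1 : Integrable f (ENNReal.ofReal p • Measure.dirac a) :=
    (integrable_dirac'' f hf a).smul_measure ENNReal.ofReal_ne_top
  have h2 : Integrable f (ENNReal.ofReal q • Measure.dirac b) :=
    (integrable_dirac'' f hf b).smul_measure ENNReal.ofReal_ne_top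
  have h3 : Integrable f (ENNReal.ofReal r • Measure.dirac c) :=
    (integrable_dirac'' f hf c).smul_measure ENNReal.ofReal_ne_top
  rw [tp, integral_add_measure (h1.add_measure h2) h3, integral_add_measure h1 h2,
    integral_smul_measure, integral_smul_measure, integral_smul_measure,
    integral_dirac, integral_dirac, integral_dirac,
    ENNReal.toReal_ofReal hp, ENNReal.toReal_ofReal hq, ENNReal.toReal_ofReal hr,
    smul_eq_mul, smul_eq_mul, smul_eq_mul]

lemma tp_apply (p q r a b c : ℝ) {s : Set ℝ} (hs : MeasurableSet s)
    (ha : a ∈ s) (hb : b ∈ s) (hc : c ∈ s) :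
    tp p q r a b c s = ENNReal.ofReal p + ENNReal.ofReal q + ENNReal.ofReal r := by
  simp [tp, Measure.add_apply, Measure.smul_apply, Measure.dirac_apply' _ hs,
    Set.indicator_of_mem, ha, hb, hc]

lemma tp_mem {μ s2 L p q r a b c : ℝ}
    (hp : 0 ≤ p) (hq : 0 ≤ q) (hr : 0 ≤ r) (hpqr : p + q + r = 1)
    (ha : a ∈ Set.Icc 0 L) (hb : b ∈ Set.Icc 0 L) (hc : c ∈ Set.Icc 0 L)
    (hmean : p * a + q * b + r * c = μ)
    (hm2 : p * a ^ 2 + q * b ^ 2 + r * c ^ 2 = μ ^ 2 + s2) :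
    tp p q r a b c ∈ PmvL μ s2 L := by
  have hone : ENNReal.ofReal p + ENNReal.ofReal q + ENNReal.ofReal r = 1 := by
    rw [← ENNReal.ofReal_add hp hq, ← ENNReal.ofReal_add (by linarith) hr, hpqr,
      ENNReal.ofReal_one]
  refine ⟨⟨?_⟩, ?_, ?_, ?_⟩
  · rw [tp_apply p q r a b c MeasurableSet.univ trivial trivial trivial, hone]
  · rw [tp_apply p q r a b c measurableSet_Icc ha hb hc, hone]
  · rw [tp_integral (fun x => x) measurable_id a b c hp hq hr]; exact hmean
  · rw [tp_integral (fun x => x ^ 2) (by measurability) a b c hp hq hr]; exact hm2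

lemma ae_Icc {μ s2 L : ℝ} {P : Measure ℝ} (hP : P ∈ PmvL μ s2 L) :
    ∀ᵐ x ∂P, x ∈ Set.Icc 0 L := by
  obtain ⟨hprob, hsupp, -, -⟩ := hP
  have := hprob
  have hcompl : P (Set.Icc 0 L)ᶜ = 0 :=
    (prob_compl_eq_zero_iff measurableSet_Icc).mpr hsupp
  rw [ae_iff]
  exact measure_mono_null (fun x hx => hx) hcompl

lemma integrable_bdd {μ s2 L : ℝ} {P : Measure ℝ} (hP : P ∈ PmvL μ s2 L)
    {f : ℝ → ℝ} (hf : Measurable f) {C : ℝ}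
    (hC : ∀ x ∈ Set.Icc 0 L, |f x| ≤ C) : Integrable f P := by
  have := hP.1
  exact (integrable_const C).mono' hf.aestronglyMeasurable
    ((ae_Icc hP).mono fun x hx => by simpa [Real.norm_eq_abs] using hC x hx)

set_option maxHeartbeats 1000000 in
theorem stmt10 (μ L s2 ξ : ℝ) (hμ : 0 < μ) (hμL : μ < L) (hs2 : 0 ≤ s2)
    (hfeas : s2 ≤ μ * (L - μ)) (hξ0 : 0 ≤ ξ) (hξL : ξ ≤ L) :
    (ξ ≤ μ - s2 / (L - μ) →
      IsGreatest ((fun P => ∫ x, min ξ x ∂P) '' PmvL μ s2 L) ξ) ∧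
    (μ - s2 / (L - μ) ≤ ξ → ξ ≤ μ + s2 / μ →
      IsGreatest ((fun P => ∫ x, min ξ x ∂P) '' PmvL μ s2 L)
        ((μ * (L + ξ) - (μ ^ 2 + s2)) / L)) ∧
    (μ + s2 / μ ≤ ξ →
      IsGreatest ((fun P => ∫ x, min ξ x ∂P) '' PmvL μ s2 L) μ) := by
  have hL : 0 < L := hμ.trans hμL
  have hd : 0 < L - μ := by linarith
  have hmin_meas : Measurable fun x : ℝ => min ξ x := measurable_const.min measurable_id
  -- integrability facts for arbitrary members
  have hints : ∀ P ∈ PmvL μ s2 L, Integrable (fun x => min ξ x) P :=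
    fun P hP => integrable_bdd hP hmin_meas (C := L) (fun x hx => by
      rw [abs_le]; constructor
      · simp only [le_min_iff]; constructor <;> [linarith; linarith [hx.1]]
      · exact le_trans (min_le_left _ _) hξL)
  have hintx : ∀ P ∈ PmvL μ s2 L, Integrable (fun x : ℝ => x) P :=
    fun P hP => integrable_bdd hP measurable_id (C := L) (fun x hx => by
      rw [abs_le]; exact ⟨by linarith [hx.1], hx.2⟩)
  have hintx2 : ∀ P ∈ PmvL μ s2 L, Integrable (fun x : ℝ => x ^ 2) P :=
    fun P hP => integrable_bdd hP (by measurability) (C := L ^ 2) (fun x hx => by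
      rw [abs_le]; constructor
      · nlinarith [sq_nonneg x]
      · nlinarith [hx.1, hx.2])
  refine ⟨?_, ?_, ?_⟩
  · -- Regime 1 : ξ ≤ μ - s2/(L-μ)
    intro hreg
    constructor
    · -- attainment
      set a : ℝ := μ - s2 / (L - μ) with ha_def
      have ha0 : 0 ≤ a := by
        rw [ha_def, sub_nonneg, div_le_iff₀ hd]; nlinarith
      have haL : a ≤ L := by
        rw [ha_def]; have : 0 ≤ s2 / (L - μ) := div_nonneg hs2 hd.le; linarith
      set D : ℝ := (L - μ) ^ 2 + s2 with hD_def
      have hD : 0 < D := by positivity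
      set p : ℝ := (L - μ) ^ 2 / D with hp_def
      have hp0 : 0 ≤ p := by positivity
      have hp1 : p ≤ 1 := by
        rw [hp_def, div_le_one hD]; linarith
      refine ⟨tp p (1 - p) 0 a L 0, tp_mem hp0 (by linarith) le_rfl (by ring)
        ⟨ha0, haL⟩ ⟨hL.le, le_rfl⟩ ⟨le_rfl, hL.le⟩ ?_ ?_, ?_⟩
      · rw [ha_def, hp_def, hD_def]; field_simp; ring
      · rw [ha_def, hp_def, hD_def]; field_simp; ring
      · beta_reduce
        rw [tp_integral _ hmin_meas a L 0 hp0 (by linarith) le_rfl,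
          min_eq_left hreg, min_eq_left hξL]
        ring
    · rintro v ⟨P, hP, rfl⟩
      haveI := hP.1
      have h1 : (∫ x, min ξ x ∂P) ≤ ∫ _x, ξ ∂P :=
        integral_mono (hints P hP) (integrable_const ξ) (fun x => min_le_left _ _)
      rwa [integral_const, probReal_univ, one_smul] at h1
  · -- Regime 2
    intro hreg1 hreg2
    constructor
    · -- attainment
      rcases eq_or_lt_of_le hξ0 with h0 | h0
      · -- ξ = 0
        obtain rfl : ξ = 0 := h0.symm
        have hs2e : s2 = μ * (L - μ) := by
          have h1 : μ - s2 / (L - μ) ≤ 0 := by linarith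
          have h2 : μ * (L - μ) ≤ s2 := by
            rw [sub_nonpos, le_div_iff₀ hd] at h1; linarith
          linarith
        refine ⟨tp (1 - μ / L) (μ / L) 0 0 L 0, tp_mem ?_ (by positivity) le_rfl
          (by ring) ⟨le_rfl, hL.le⟩ ⟨hL.le, le_rfl⟩ ⟨le_rfl, hL.le⟩ ?_ ?_, ?_⟩
        · rw [sub_nonneg, div_le_one hL]; linarith
        · field_simp; ring
        · rw [hs2e]; field_simp; ring
        · beta_reduce
          rw [tp_integral _ hmin_meas 0 L 0 (by rw [sub_nonneg, div_le_one hL]; linarith)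
            (by positivity) le_rfl, min_self, min_eq_left hL.le, hs2e]
          field_simp
          ring
      rcases eq_or_lt_of_le hξL with hL0 | hL0
      · -- ξ = L
        have hs2e : s2 = μ * (L - μ) := by
          have h2 : μ * (L - μ) ≤ s2 := by
            have := (le_div_iff₀ hμ).mp (by rw [hL0] at hreg2; linarith : L - μ ≤ s2 / μ)
            linarith
          linarith
        refine ⟨tp (1 - μ / L) (μ / L) 0 0 L 0, tp_mem ?_ (by positivity) le_rfl
          (by ring) ⟨le_rfl, hL.le⟩ ⟨hL.le, le_rfl⟩ ⟨le_rfl, hL.le⟩ ?_ ?_, ?_⟩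
        · rw [sub_nonneg, div_le_one hL]; linarith
        · field_simp; ring
        · rw [hs2e]; field_simp; ring
        · beta_reduce
          rw [tp_integral _ hmin_meas 0 L 0 (by rw [sub_nonneg, div_le_one hL]; linarith)
            (by positivity) le_rfl, min_eq_right hξ0, min_eq_left hξL, hL0, hs2e]
          field_simp; ring
      · -- interior 0 < ξ < L
        have hLξ : 0 < L - ξ := by linarith
        set pξ : ℝ := (μ * (L - μ) - s2) / (ξ * (L - ξ)) with hpξ_def
        set pL : ℝ := (μ ^ 2 + s2 - μ * ξ) / (L * (L - ξ)) with hpL_def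
        have hpξ0 : 0 ≤ pξ := by
          apply div_nonneg (by linarith) (by positivity)
        have hpL0 : 0 ≤ pL := by
          apply div_nonneg _ (by positivity)
          have := (le_div_iff₀ hμ).mp (by linarith : ξ - μ ≤ s2 / μ)
          nlinarith
        have hp00 : 0 ≤ 1 - pξ - pL := by
          have key : 0 ≤ s2 - (μ - ξ) * (L - μ) := by
            have := (le_div_iff₀ hd).mp (by linarith : μ - ξ ≤ s2 / (L - μ))
            nlinarith
          rw [hpξ_def, hpL_def, sub_sub, sub_nonneg,
            div_add_div _ _ (by positivity : (ξ * (L - ξ)) ≠ 0)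
              (by positivity : (L * (L - ξ)) ≠ 0),
            div_le_one (by positivity)]
          nlinarith [mul_nonneg (mul_nonneg hLξ.le hLξ.le) key]
        refine ⟨tp (1 - pξ - pL) pξ pL 0 ξ L, tp_mem hp00 hpξ0 hpL0
          (by ring) ⟨le_rfl, hL.le⟩ ⟨hξ0, hξL⟩ ⟨hL.le, le_rfl⟩ ?_ ?_, ?_⟩
        · rw [hpξ_def, hpL_def]; field_simp; ring
        · rw [hpξ_def, hpL_def]; field_simp; ring
        · beta_reduce
          rw [tp_integral _ hmin_meas 0 ξ L hp00 hpξ0 hpL0,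
            min_eq_right hξ0, min_self, min_eq_left hξL]
          rw [hpξ_def, hpL_def]; field_simp; ring
    · -- upper bound
      rintro v ⟨P, hP, rfl⟩
      obtain ⟨hprob, hsupp, hmean, hm2⟩ := hP
      have hintg : Integrable (fun x : ℝ => ((L + ξ) * x - x ^ 2) / L) P := by
        refine integrable_bdd ⟨hprob, hsupp, hmean, hm2⟩
          (((measurable_const.mul measurable_id).sub (measurable_id.pow_const 2)).div_const L)
          (C := 3 * L) (fun x hx => by
            rw [abs_div, abs_of_pos hL, div_le_iff₀ hL, abs_le]
            constructor <;> nlinarith [hx.1, hx.2, abs_nonneg x])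
      have hle : (∫ x, min ξ x ∂P) ≤ ∫ x, ((L + ξ) * x - x ^ 2) / L ∂P := by
        refine integral_mono_ae (hints P ⟨hprob, hsupp, hmean, hm2⟩) hintg
          ((ae_Icc ⟨hprob, hsupp, hmean, hm2⟩).mono fun x hx => ?_)
        rcases le_total x ξ with h | h
        · calc min ξ x ≤ x := min_le_right _ _
            _ ≤ ((L + ξ) * x - x ^ 2) / L := by
              rw [le_div_iff₀ hL]; nlinarith [hx.1]
        · calc min ξ x ≤ ξ := min_le_left _ _
            _ ≤ ((L + ξ) * x - x ^ 2) / L := by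
              rw [le_div_iff₀ hL]; nlinarith [hx.2]
      have hval : (∫ x, ((L + ξ) * x - x ^ 2) / L ∂P)
          = (μ * (L + ξ) - (μ ^ 2 + s2)) / L := by
        rw [integral_div, integral_sub ((hintx P ⟨hprob, hsupp, hmean, hm2⟩).const_mul _)
          (hintx2 P ⟨hprob, hsupp, hmean, hm2⟩), integral_const_mul, hmean, hm2]
        ring
      rwa [hval] at hle
  · -- Regime 3
    intro hreg
    constructor
    · set b : ℝ := μ + s2 / μ with hb_def
      have hb0 : 0 < b := by positivity
      have hbξ : b ≤ ξ := hreg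
      have hbL : b ≤ L := le_trans hbξ hξL
      set w : ℝ := μ ^ 2 / (μ ^ 2 + s2) with hw_def
      have hw0 : 0 ≤ w := by positivity
      have hw1 : w ≤ 1 := by
        rw [hw_def, div_le_one (by positivity)]; linarith
      refine ⟨tp (1 - w) w 0 0 b 0, tp_mem (by linarith) hw0 le_rfl (by ring)
        ⟨le_rfl, hL.le⟩ ⟨hb0.le, hbL⟩ ⟨le_rfl, hL.le⟩ ?_ ?_, ?_⟩
      · rw [hb_def, hw_def]; field_simp; ring
      · rw [hb_def, hw_def]; field_simp; ring
      · beta_reduce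
        rw [tp_integral _ hmin_meas 0 b 0 (by linarith) hw0 le_rfl,
          min_eq_right hξ0, min_eq_right hbξ]
        rw [hb_def, hw_def]; field_simp; ring
    · rintro v ⟨P, hP, rfl⟩
      obtain ⟨hprob, hsupp, hmean, hm2⟩ := hP
      have h1 : (∫ x, min ξ x ∂P) ≤ ∫ x, x ∂P :=
        integral_mono (hints P ⟨hprob, hsupp, hmean, hm2⟩)
          (hintx P ⟨hprob, hsupp, hmean, hm2⟩) (fun x => min_le_right _ _)
      rwa [hmean] at h1
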